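/- Let H : ℝ^{n1} × ℝ^{n2} → ℝ be differentiable such that for each fixed x1 the map x2 ↦ ∇_{x2}H(x1, x2) is L2(x1)-Lipschitz, with L2(x1^k) ≤ λ2⁺. Let x^{k} = (x1^{k}, x2^{k}), x^{k−1}, x^{k−2} be iterates, let α2^{k−1}, β2^{k−1} ∈ [0,1], let z2^{k−1} = x2^{k−1} + β2^{k−1}(x2^{k−1} − x2^{k−2}), and let 0 < τ2^{k−1} ≤ τ2⁺. Define v2^k := ∇_{x2}H(x1^k, x2^k) − ∇_{x2}H(x1^k, z2^{k−1}) + τ2^{k−1}(x2^{k−1} − x2^k + α2^{k−1}(x2^{k−1} − x2^{k−2})). Then ‖v2^k‖ ≤ (τ2⁺ + λ2⁺)(‖x^k − x^{k−1}‖ + ‖x^{k−1} − x^{k−2}‖). -/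
import Mathlib


/-- bound on the second block of the subgradient, from Proposition 4.8.
`H : ℝ^{n1} × ℝ^{n2} → ℝ` is differentiable in each block and, for each fixed `x1`,
`x2 ↦ ∇_{x2}H(x1, x2)` is `L2(x1)`-Lipschitz, with `L2(x1^k) ≤ λ2⁺`.  With iterates
`x^k, x^{k−1}, x^{k−2}`, `α2, β2 ∈ [0,1]`,
`z2^{k−1} = x2^{k−1} + β2(x2^{k−1} − x2^{k−2})`, `0 < τ2^{k−1} ≤ τ2⁺`, and
`v2^k = ∇_{x2}H(x1^k, x2^k) − ∇_{x2}H(x1^k, z2^{k−1})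
  + τ2^{k−1}(x2^{k−1} − x2^k + α2(x2^{k−1} − x2^{k−2}))`,
one has `‖v2^k‖ ≤ (τ2⁺ + λ2⁺)(‖x^k − x^{k−1}‖ + ‖x^{k−1} − x^{k−2}‖)`, where the norm on
pairs is `‖(a,b)‖ = √(‖a‖² + ‖b‖²)`. -/
theorem stmt_12 {n1 n2 : ℕ}
    (H : EuclideanSpace ℝ (Fin n1) → EuclideanSpace ℝ (Fin n2) → ℝ)
    (hH1 : ∀ x2, Differentiable ℝ (fun x1 => H x1 x2))
    (hH2 : ∀ x1, Differentiable ℝ (fun x2 => H x1 x2))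
    (L2 : EuclideanSpace ℝ (Fin n1) → ℝ) (hL2nonneg : ∀ x1, 0 ≤ L2 x1)
    (hL2lip : ∀ x1 u v, ‖gradient (fun x2 => H x1 x2) u - gradient (fun x2 => H x1 x2) v‖
      ≤ L2 x1 * ‖u - v‖)
    -- iterates x^k, x^{k−1}, x^{k−2}
    (x1k x1km1 x1km2 : EuclideanSpace ℝ (Fin n1))
    (x2k x2km1 x2km2 : EuclideanSpace ℝ (Fin n2))
    (lam2plus : ℝ) (hlam : L2 x1k ≤ lam2plus)
    (α2 β2 : ℝ) (hα2 : α2 ∈ Set.Icc (0 : ℝ) 1) (hβ2 : β2 ∈ Set.Icc (0 : ℝ) 1)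
    (z2km1 : EuclideanSpace ℝ (Fin n2))
    (hz2 : z2km1 = x2km1 + β2 • (x2km1 - x2km2))
    (τ2km1 τ2plus : ℝ) (hτpos : 0 < τ2km1) (hττ : τ2km1 ≤ τ2plus)
    (v2k : EuclideanSpace ℝ (Fin n2))
    (hv2 : v2k = gradient (fun b => H x1k b) x2k - gradient (fun b => H x1k b) z2km1
      + τ2km1 • (x2km1 - x2k + α2 • (x2km1 - x2km2))) :
    ‖v2k‖ ≤ (τ2plus + lam2plus) * (Real.sqrt (‖x1k - x1km1‖ ^ 2 + ‖x2k - x2km1‖ ^ 2)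
      + Real.sqrt (‖x1km1 - x1km2‖ ^ 2 + ‖x2km1 - x2km2‖ ^ 2)) := by
  obtain ⟨hα0, hα1⟩ := hα2
  obtain ⟨hβ0, hβ1⟩ := hβ2
  set A := Real.sqrt (‖x1k - x1km1‖ ^ 2 + ‖x2k - x2km1‖ ^ 2) with hA
  set B := Real.sqrt (‖x1km1 - x1km2‖ ^ 2 + ‖x2km1 - x2km2‖ ^ 2) with hB
  have hA2 : ‖x2k - x2km1‖ ≤ A := by
    rw [hA]
    calc ‖x2k - x2km1‖ = Real.sqrt (‖x2k - x2km1‖ ^ 2) := by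
          rw [Real.sqrt_sq (norm_nonneg _)]
      _ ≤ _ := Real.sqrt_le_sqrt (le_add_of_nonneg_left (by positivity))
  have hB2 : ‖x2km1 - x2km2‖ ≤ B := by
    rw [hB]
    calc ‖x2km1 - x2km2‖ = Real.sqrt (‖x2km1 - x2km2‖ ^ 2) := by
          rw [Real.sqrt_sq (norm_nonneg _)]
      _ ≤ _ := Real.sqrt_le_sqrt (le_add_of_nonneg_left (by positivity))
  have hAnn : (0:ℝ) ≤ A := Real.sqrt_nonneg _
  have hBnn : (0:ℝ) ≤ B := Real.sqrt_nonneg _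
  have hlnn : 0 ≤ lam2plus := le_trans (hL2nonneg x1k) hlam
  have hτnn : 0 ≤ τ2plus := le_trans hτpos.le hττ
  have h1 : ‖gradient (fun b => H x1k b) x2k - gradient (fun b => H x1k b) z2km1‖
      ≤ lam2plus * (A + B) := by
    calc ‖gradient (fun b => H x1k b) x2k - gradient (fun b => H x1k b) z2km1‖
        ≤ L2 x1k * ‖x2k - z2km1‖ := hL2lip x1k x2k z2km1
      _ ≤ lam2plus * ‖x2k - z2km1‖ :=
          mul_le_mul_of_nonneg_right hlam (norm_nonneg _)
      _ ≤ lam2plus * (A + B) := by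
          apply mul_le_mul_of_nonneg_left _ hlnn
          have : x2k - z2km1 = (x2k - x2km1) - β2 • (x2km1 - x2km2) := by
            rw [hz2]; abel
          rw [this]
          calc ‖(x2k - x2km1) - β2 • (x2km1 - x2km2)‖
              ≤ ‖x2k - x2km1‖ + ‖β2 • (x2km1 - x2km2)‖ := norm_sub_le _ _
            _ = ‖x2k - x2km1‖ + |β2| * ‖x2km1 - x2km2‖ := by rw [norm_smul, Real.norm_eq_abs]
            _ ≤ A + 1 * B := by
                gcongr
                rw [abs_of_nonneg hβ0]; exact hβ1
            _ = A + B := by ring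
  have h2 : ‖τ2km1 • (x2km1 - x2k + α2 • (x2km1 - x2km2))‖ ≤ τ2plus * (A + B) := by
    rw [norm_smul, Real.norm_eq_abs, abs_of_nonneg hτpos.le]
    calc τ2km1 * ‖x2km1 - x2k + α2 • (x2km1 - x2km2)‖
        ≤ τ2plus * ‖x2km1 - x2k + α2 • (x2km1 - x2km2)‖ :=
          mul_le_mul_of_nonneg_right hττ (norm_nonneg _)
      _ ≤ τ2plus * (A + B) := by
          apply mul_le_mul_of_nonneg_left _ hτnn
          calc ‖x2km1 - x2k + α2 • (x2km1 - x2km2)‖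
              ≤ ‖x2km1 - x2k‖ + |α2| * ‖x2km1 - x2km2‖ := by
                refine (norm_add_le _ _).trans ?_
                rw [norm_smul, Real.norm_eq_abs]
            _ ≤ A + 1 * B := by
                rw [norm_sub_rev]
                gcongr
                rw [abs_of_nonneg hα0]; exact hα1
            _ = A + B := by ring
  calc ‖v2k‖ ≤ ‖gradient (fun b => H x1k b) x2k - gradient (fun b => H x1k b) z2km1‖
        + ‖τ2km1 • (x2km1 - x2k + α2 • (x2km1 - x2km2))‖ := by rw [hv2]; exact norm_add_le _ _
    _ ≤ lam2plus * (A + B) + τ2plus * (A + B) := add_le_add h1 h2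
    _ = (τ2plus + lam2plus) * (A + B) := by ring
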